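/- Let V be a finite-dimensional real inner product space and φ an alternating p-form on V. An orthonormal p-tuple ξ = (e₁,…,e_p) is φ-critical if and only if λ_φ(A)(e₁,…,e_p) = 0 for every skew-adjoint endomorphism A of V (i.e. every A with ⟨A v, w⟩ = −⟨v, A w⟩ for all v, w ∈ V). (Remark A.7, equation (A.4)) -/

import Mathlib

open scoped RealInnerProductSpace

noncomputable section

variable {V : Type*} [NormedAddCommGroup V] [InnerProductSpace ℝ V] [FiniteDimensional ℝ V]

/-- `λ_φ(A)`, the action of the endomorphism `A` on the alternating `p`-form `φ` as a
derivation: `λ_φ(A)(v₁,…,v_p) = Σ_k φ(v₁,…,A v_k,…,v_p)`. -/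
def lambdaForm {p : ℕ} (φ : V [⋀^Fin p]→ₗ[ℝ] ℝ) (A : V →ₗ[ℝ] V) (v : Fin p → V) : ℝ :=
  ∑ k, φ (Function.update v k (A (v k)))

/-- An orthonormal `p`-tuple `ξ = (e₁,…,e_p)` is `φ`-critical if `φ` vanishes on all the
first cousins of `ξ`, i.e. `φ(e₁,…,e_{k−1}, b, e_{k+1},…,e_p) = 0` for every index `k`
and every `b` orthogonal to `span{e₁,…,e_p}`. -/
def IsPhiCritical {p : ℕ} (φ : V [⋀^Fin p]→ₗ[ℝ] ℝ) (e : Fin p → V) : Prop :=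
  ∀ (k : Fin p) (b : V), b ∈ (Submodule.span ℝ (Set.range e))ᗮ →
    φ (Function.update e k b) = 0

set_option linter.unusedSectionVars false in
lemma mem_orth_span_range_iff {p : ℕ} (e : Fin p → V) (b : V) :
    b ∈ (Submodule.span ℝ (Set.range e))ᗮ ↔ ∀ i, ⟪e i, b⟫ = 0 := by
  rw [Submodule.mem_orthogonal]
  constructor
  · intro h i
    exact h _ (Submodule.subset_span (Set.mem_range_self i))
  · intro h u hu
    induction hu using Submodule.span_induction with
    | mem x hx => obtain ⟨i, rfl⟩ := hx; exact h i
    | zero => simp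
    | add x y _ _ hx hy => rw [inner_add_left, hx, hy, add_zero]
    | smul c x _ hx => rw [real_inner_smul_left, hx, mul_zero]

/-- Remark A.7, equation (A.4): an orthonormal `p`-tuple `ξ = (e₁,…,e_p)` is `φ`-critical
if and only if `λ_φ(A)(ξ) = 0` for every skew-adjoint endomorphism `A` of `V`. -/
theorem isPhiCritical_iff_lambdaForm_skew_eq_zero {p : ℕ} (hp : 1 ≤ p)
    (φ : V [⋀^Fin p]→ₗ[ℝ] ℝ)
    (e : Fin p → V) (he : Orthonormal ℝ e) :
    IsPhiCritical φ e ↔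
      ∀ A : V →ₗ[ℝ] V, (∀ v w : V, ⟪A v, w⟫ = -⟪v, A w⟫) → lambdaForm φ A e = 0 := by
  constructor
  · intro hcrit A hA
    have hdiag : ∀ v : V, ⟪v, A v⟫ = 0 := by
      intro v
      have := hA v v
      rw [real_inner_comm (A v) v] at this
      have h2 := real_inner_comm v (A v)
      linarith [this, h2]
    have hdecomp : ∀ k : Fin p, φ (Function.update e k (A (e k))) = 0 := by
      intro k
      set b : V := A (e k) - ∑ j, ⟪e j, A (e k)⟫ • e j with hb
      have hborth : b ∈ (Submodule.span ℝ (Set.range e))ᗮ := by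
        rw [mem_orth_span_range_iff]
        intro i
        rw [hb, inner_sub_right, inner_sum]
        simp only [real_inner_smul_right]
        rw [Finset.sum_eq_single i]
        · simp [orthonormal_iff_ite.mp he i i, he.1 i]
        · intro j _ hj
          rw [he.2 (Ne.symm hj), mul_zero]
        · simp
      have : A (e k) = b + ∑ j, ⟪e j, A (e k)⟫ • e j := by rw [hb]; abel
      rw [this]
      have hupd : ∀ x y : V, φ (Function.update e k (x + y)) =
          φ (Function.update e k x) + φ (Function.update e k y) :=
        fun x y => φ.map_update_add e k x y
      rw [hupd, hcrit k b hborth, zero_add]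
      have hsum : φ (Function.update e k (∑ j, ⟪e j, A (e k)⟫ • e j)) =
          ∑ j, φ (Function.update e k (⟪e j, A (e k)⟫ • e j)) :=
        map_sum (φ.toMultilinearMap.toLinearMap e k) _ _
      rw [hsum]
      apply Finset.sum_eq_zero
      intro j _
      rw [φ.map_update_smul]
      rcases eq_or_ne j k with rfl | hjk
      · rw [hdiag (e j), zero_smul]
      · have : φ (Function.update e k (e j)) = 0 := by
          apply φ.map_eq_zero_of_eq _ (i := j) (j := k) _ hjk
          rw [Function.update_of_ne hjk, Function.update_self]
        rw [this, smul_zero]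
    simp only [lambdaForm]
    exact Finset.sum_eq_zero fun k _ => hdecomp k
  · intro h k b hb
    set A : V →ₗ[ℝ] V :=
      { toFun := fun v => ⟪e k, v⟫ • b - ⟪b, v⟫ • e k
        map_add' := fun x y => by simp [inner_add_right, add_smul]; abel
        map_smul' := fun c x => by
          simp [real_inner_smul_right, smul_smul, smul_sub] } with hAdef
    have hskew : ∀ v w : V, ⟪A v, w⟫ = -⟪v, A w⟫ := by
      intro v w
      simp only [hAdef, LinearMap.coe_mk, AddHom.coe_mk,
        inner_sub_left, inner_sub_right, real_inner_smul_left, real_inner_smul_right]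
      rw [real_inner_comm v (e k), real_inner_comm b v]
      ring
    have hAe : ∀ j : Fin p, A (e j) = if j = k then b else 0 := by
      intro j
      have hbe : ⟪b, e j⟫ = 0 := by
        rw [real_inner_comm]
        exact (mem_orth_span_range_iff e b).1 hb j
      simp only [hAdef, LinearMap.coe_mk, AddHom.coe_mk, hbe, zero_smul, sub_zero]
      rcases eq_or_ne j k with rfl | hjk
      · simp [orthonormal_iff_ite.mp he j j, he.1 j]
      · rw [he.2 (Ne.symm hjk), zero_smul, if_neg hjk]
    have := h A hskew
    rw [lambdaForm] at this
    rw [Finset.sum_eq_single k] at this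
    · rwa [hAe k, if_pos rfl] at this
    · intro j _ hjk
      rw [hAe j, if_neg hjk]
      exact φ.map_update_zero e j
    · simp
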